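/- Let f : (ℝ^m,0) → (ℝ^n,0) be a smooth map-germ with m < n and rank df_0 = m−1. Then there exists a smooth vector field η on a neighborhood of 0 in ℝ^m, nowhere vanishing, such that for every singular point p of f near 0 (i.e. every p with rank df_p < m) one has ker df_p = span(η_p). -/

import Mathlib

open Filter Topology Matrix

noncomputable section

/-- The `q`-th component of `f` (`0`-indexed), or `0` if `q` is out of range. -/
def comp {m n : ℕ} (f : (Fin m → ℝ) → (Fin n → ℝ)) (q : ℕ) : (Fin m → ℝ) → ℝ :=
  fun x => if h : q < n then f x ⟨q, h⟩ else 0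

/-- The `q`-th coordinate of `x` (`0`-indexed), or `0` if `q` is out of range. -/
def xhat {m : ℕ} (x : Fin m → ℝ) (q : ℕ) : ℝ := if h : q < m then x ⟨q, h⟩ else 0

/-- The partial derivative of `g` at `p` in the `q`-th coordinate direction. -/
def pd {m : ℕ} (g : (Fin m → ℝ) → ℝ) (p : Fin m → ℝ) (q : ℕ) : ℝ :=
  fderiv ℝ g p (fun l : Fin m => if l.val = q then 1 else 0)

/-- The Jacobian matrix of `f` at `p`; its rank is the rank of `df_p`. -/
def jac {m n : ℕ} (f : (Fin m → ℝ) → (Fin n → ℝ)) (p : Fin m → ℝ) : Matrix (Fin n) (Fin m) ℝ :=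
  Matrix.of fun i l => pd (comp f i.val) p l.val

/-- `lam f i` is the paper's `λ_{i+1}` (here `i` is `0`-indexed, `0 ≤ i ≤ n-m`):
the determinant of the `m×m` matrix whose rows are the gradients of
`f_0, …, f_{m-2}, f_{m-1+i}` (`0`-indexed components). -/
def lam {m n : ℕ} (f : (Fin m → ℝ) → (Fin n → ℝ)) (i : ℕ) (p : Fin m → ℝ) : ℝ :=
  Matrix.det (Matrix.of fun (k l : Fin m) =>
    pd (comp f (if k.val < m - 1 then k.val else m - 1 + i)) p l.val)

/-- `Λ = (λ_1, …, λ_{n-m+1}) : ℝ^m → ℝ^{n-m+1}`. -/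
def Lam {m n : ℕ} (f : (Fin m → ℝ) → (Fin n → ℝ)) (p : Fin m → ℝ) : Fin (n - m + 1) → ℝ :=
  fun i => lam f i.val p

/-- The Jacobian matrix of `Λ` at `p`. -/
def dLam {m n : ℕ} (f : (Fin m → ℝ) → (Fin n → ℝ)) (p : Fin m → ℝ) :
    Matrix (Fin (n - m + 1)) (Fin m) ℝ :=
  Matrix.of fun i l => pd (fun x => Lam f x i) p l.val

/-- `etaIter f η j = η^jΛ`, the `j`-fold iterated directional derivative of `Λ` along `η`. -/
def etaIter {m n : ℕ} (f : (Fin m → ℝ) → (Fin n → ℝ)) (η : (Fin m → ℝ) → (Fin m → ℝ)) :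
    ℕ → (Fin m → ℝ) → (Fin (n - m + 1) → ℝ)
  | 0 => Lam f
  | j + 1 => fun p => fderiv ℝ (etaIter f η j) p (η p)

/-- The Jacobian matrix of `(Λ, ηΛ, …, η^jΛ) : ℝ^m → ℝ^{(j+1)(n-m+1)}` at `p`. -/
def stackJac {m n : ℕ} (f : (Fin m → ℝ) → (Fin n → ℝ)) (η : (Fin m → ℝ) → (Fin m → ℝ))
    (j : ℕ) (p : Fin m → ℝ) : Matrix (Fin (j + 1) × Fin (n - m + 1)) (Fin m) ℝ :=
  Matrix.of fun si l => pd (fun x => etaIter f η si.1.val x si.2) p l.val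

/-- A diffeomorphism-germ `(ℝ^k,0) → (ℝ^k,0)`: it fixes `0`, is smooth at `0` and its
differential at `0` is invertible (so by the inverse function theorem it is a germ of a
diffeomorphism). -/
def IsDiffeoGerm {k : ℕ} (σ : (Fin k → ℝ) → (Fin k → ℝ)) : Prop :=
  σ 0 = 0 ∧ ContDiffAt ℝ (⊤ : ℕ∞) σ 0 ∧ LinearMap.det ((fderiv ℝ σ 0).toLinearMap) ≠ 0

/-- An orientation-preserving diffeomorphism-germ `(ℝ^k,0) → (ℝ^k,0)`. -/
def IsOPDiffeoGerm {k : ℕ} (σ : (Fin k → ℝ) → (Fin k → ℝ)) : Prop :=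
  σ 0 = 0 ∧ ContDiffAt ℝ (⊤ : ℕ∞) σ 0 ∧ 0 < LinearMap.det ((fderiv ℝ σ 0).toLinearMap)

/-- `A`-equivalence of map-germs at `0`. -/
def AEquiv {m n : ℕ} (f g : (Fin m → ℝ) → (Fin n → ℝ)) : Prop :=
  ∃ (φ : (Fin m → ℝ) → (Fin m → ℝ)) (Φ : (Fin n → ℝ) → (Fin n → ℝ)),
    IsDiffeoGerm φ ∧ IsDiffeoGerm Φ ∧ ∀ᶠ x in 𝓝 0, Φ (f (φ x)) = g x

/-- The Morin normal form `h_{0,r} : (ℝ^m,0) → (ℝ^n,0)` (all indices `0`-indexed):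
`h_{0,r}(x) = (x_1, …, x_{m-1}, h_1(x), …, h_{n-m+1}(x))` with
`h_i(x) = Σ_{j=1}^r x_{(i-1)r+j} x_m^j` for `i = 1, …, n-m` and
`h_{n-m+1}(x) = Σ_{j=1}^{r-1} x_{(n-m)r+j} x_m^j + x_m^{r+1}`. -/
def hMorinNF (m n r : ℕ) : (Fin m → ℝ) → (Fin n → ℝ) := fun x k =>
  if k.val < m - 1 then xhat x k.val
  else if k.val - (m - 1) < n - m then
    ∑ j ∈ Finset.range r, xhat x ((k.val - (m - 1)) * r + j) * (xhat x (m - 1)) ^ (j + 1)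
  else
    (∑ j ∈ Finset.range (r - 1), xhat x ((n - m) * r + j) * (xhat x (m - 1)) ^ (j + 1))
      + (xhat x (m - 1)) ^ (r + 1)

/-- The normal form `h_{r,(ε₁,ε₂)}(x) = (ε₁x_1, x_2, …, x_{m-1},
ε₁x_1x_m + Σ_{j=2}^r x_jx_m^j, h_2(x), …, h_{n-m}(x), ε₂h_{n-m+1}(x))`. -/
def hSign (m n r : ℕ) (e1 e2 : ℝ) : (Fin m → ℝ) → (Fin n → ℝ) := fun x k =>
  if k.val = 0 then e1 * xhat x 0
  else if k.val < m - 1 then xhat x k.val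
  else if k.val = m - 1 then
    e1 * xhat x 0 * xhat x (m - 1)
      + ∑ j ∈ Finset.Ico 1 r, xhat x j * (xhat x (m - 1)) ^ (j + 1)
  else if k.val - (m - 1) < n - m then
    ∑ j ∈ Finset.range r, xhat x ((k.val - (m - 1)) * r + j) * (xhat x (m - 1)) ^ (j + 1)
  else
    e2 * ((∑ j ∈ Finset.range (r - 1), xhat x ((n - m) * r + j) * (xhat x (m - 1)) ^ (j + 1))
      + (xhat x (m - 1)) ^ (r + 1))

section crossHelpers
variable {m n : ℕ}

/-- cross product of the rows of an m×(m+1) matrix -/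
def crossVec {m' : ℕ} (B : Matrix (Fin m') (Fin (m' + 1)) ℝ) : Fin (m' + 1) → ℝ :=
  fun l => (-1 : ℝ) ^ (l : ℕ) * (B.submatrix id l.succAbove).det

lemma cross_pair {m' : ℕ} (B : Matrix (Fin m') (Fin (m' + 1)) ℝ) (w : Fin (m' + 1) → ℝ) :
    (Matrix.of (Fin.cons w B)).det = ∑ l, w l * crossVec B l := by
  have hsub : ∀ l : Fin (m' + 1),
      (Matrix.of (Fin.cons w B)).submatrix Fin.succ l.succAbove
        = B.submatrix id l.succAbove := by
    intro l; ext i j; simp [Fin.cons_succ]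
    exact congrFun (Fin.cons_succ (α := fun _ => Fin (m' + 1) → ℝ) w B i) _
  rw [Matrix.det_succ_row_zero]
  refine Finset.sum_congr rfl fun l _ => ?_
  rw [hsub]
  simp [crossVec]
  show (-1) ^ (l : ℕ) * w l * (B.submatrix id l.succAbove).det = _
  ring

lemma mulVec_crossVec {m' : ℕ} (B : Matrix (Fin m') (Fin (m' + 1)) ℝ) :
    B.mulVec (crossVec B) = 0 := by
  funext k
  have h0 : (Matrix.of (Fin.cons (B k) B)).det = 0 := by
    apply Matrix.det_zero_of_row_eq (i := (0 : Fin (m' + 1))) (j := Fin.succ k)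
      (Fin.succ_ne_zero k).symm
    rfl
  have := cross_pair B (B k)
  rw [h0] at this
  simp [Matrix.mulVec, dotProduct, ← this]

lemma crossVec_ne_zero {m' : ℕ} (B : Matrix (Fin m') (Fin (m' + 1)) ℝ)
    (h : LinearIndependent ℝ (fun k => B k)) : crossVec B ≠ 0 := by
  have hspan : Submodule.span ℝ (Set.range fun k => B k) ≠ ⊤ := by
    intro htop
    have h1 : Module.finrank ℝ (Submodule.span ℝ (Set.range fun k => B k)) = m' :=
      by simpa using finrank_span_eq_card h
    rw [htop, finrank_top] at h1
    simp [Module.finrank_fin_fun] at h1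
  obtain ⟨w, hw⟩ : ∃ w, w ∉ Submodule.span ℝ (Set.range fun k => B k) := by
    by_contra h'
    push_neg at h'
    exact hspan (eq_top_iff.mpr fun x _ => h' x)
  intro hc
  have hli : LinearIndependent ℝ (Fin.cons w (fun k => B k) : Fin (m' + 1) → _) :=
    linearIndependent_fin_cons.mpr ⟨h, hw⟩
  have hunit : IsUnit (Matrix.of (Fin.cons w B)) := by
    rw [← Matrix.linearIndependent_rows_iff_isUnit]
    exact hli
  have hdet : (Matrix.of (Fin.cons w B)).det ≠ 0 :=
    (Matrix.isUnit_iff_isUnit_det _ |>.mp hunit).ne_zero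
  apply hdet
  rw [cross_pair, hc]
  simp

end crossHelpers

section jacHelpers
variable {m n : ℕ}

lemma pd_eq (g : (Fin m → ℝ) → ℝ) (p : Fin m → ℝ) (l : Fin m) :
    pd g p l.val = fderiv ℝ g p (Pi.single l 1) := by
  unfold pd
  congr 1
  funext l'
  simp [Pi.single_apply, Fin.val_eq_val]

lemma comp_eq (f : (Fin m → ℝ) → (Fin n → ℝ)) (i : Fin n) :
    _root_.comp f i.val = fun x => f x i := by
  funext x; simp [_root_.comp]

lemma contDiff_pd {g : (Fin m → ℝ) → ℝ} (hg : ContDiff ℝ (⊤ : ℕ∞) g) (q : ℕ) :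
    ContDiff ℝ (⊤ : ℕ∞) (fun p => pd g p q) := by
  unfold pd
  exact (hg.fderiv_right (by exact_mod_cast le_top)).clm_apply contDiff_const

lemma contDiff_jac {f : (Fin m → ℝ) → (Fin n → ℝ)} (hf : ContDiff ℝ (⊤ : ℕ∞) f)
    (i : Fin n) (l : Fin m) : ContDiff ℝ (⊤ : ℕ∞) (fun p => jac f p i l) := by
  have : ContDiff ℝ (⊤ : ℕ∞) (comp f i.val) := by
    rw [comp_eq]
    exact contDiff_pi.mp hf i
  exact contDiff_pd this l.val

lemma fderiv_eq_jac_mulVec {f : (Fin m → ℝ) → (Fin n → ℝ)} (hf : ContDiff ℝ (⊤ : ℕ∞) f)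
    (p v : _) : fderiv ℝ f p v = (jac f p).mulVec v := by
  have hdi : ∀ i : Fin n, DifferentiableAt ℝ (fun x => f x i) p := fun i =>
    ((contDiff_pi.mp hf i).differentiable (by simp)).differentiableAt
  funext i
  have h1 : fderiv ℝ f p v i = fderiv ℝ (fun x => f x i) p v := by
    have : f = fun x j => f x j := rfl
    rw [this, fderiv_pi hdi]
    rfl
  have hv : v = ∑ l, v l • (Pi.single l 1 : Fin m → ℝ) := by
    funext j
    simp [Finset.sum_apply, Pi.single_apply]
  rw [h1]
  conv_lhs => rw [hv]
  rw [map_sum]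
  simp only [_root_.map_smul]
  rw [Matrix.mulVec, dotProduct]
  refine Finset.sum_congr rfl fun l _ => ?_
  rw [smul_eq_mul, mul_comm]
  congr 1
  rw [jac, Matrix.of_apply, pd_eq, comp_eq]

lemma ker_fderiv_eq {f : (Fin m → ℝ) → (Fin n → ℝ)} (hf : ContDiff ℝ (⊤ : ℕ∞) f)
    (p : Fin m → ℝ) :
    LinearMap.ker (fderiv ℝ f p).toLinearMap = LinearMap.ker ((jac f p).mulVecLin) := by
  ext v
  simp [LinearMap.mem_ker, Matrix.mulVecLin_apply, fderiv_eq_jac_mulVec hf]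

lemma contDiff_det {ι : Type*} [Fintype ι] [DecidableEq ι] {E : Type*}
    [NormedAddCommGroup E] [NormedSpace ℝ E] {M : E → Matrix ι ι ℝ}
    (h : ∀ i j, ContDiff ℝ (⊤ : ℕ∞) fun p => M p i j) :
    ContDiff ℝ (⊤ : ℕ∞) fun p => (M p).det := by
  have : (fun p => (M p).det)
      = fun p => ∑ σ : Equiv.Perm ι, ((Equiv.Perm.sign σ : ℤ) : ℝ) * ∏ i, M p (σ i) i := by
    funext p
    rw [Matrix.det_apply]
    simp [Units.smul_def, zsmul_eq_mul]
  rw [this]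
  exact ContDiff.sum fun σ _ => contDiff_const.mul (contDiff_prod fun i _ => h (σ i) i)

lemma exists_rows {n m' : ℕ} (A : Matrix (Fin n) (Fin (m' + 1)) ℝ) (h : A.rank = m') :
    ∃ r : Fin m' → Fin n, LinearIndependent ℝ (fun k => A (r k)) := by
  classical
  have hspan : Module.finrank ℝ (Submodule.span ℝ (Set.range A)) = m' := by
    exact (Matrix.rank_eq_finrank_span_row A).symm.trans h
  obtain ⟨b, hb_sub, hb_span, hb_li⟩ := exists_linearIndependent ℝ (Set.range A)
  have hbfin : b.Finite := (Set.finite_range A).subset hb_sub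
  haveI : Fintype b := hbfin.fintype
  have hcard : Fintype.card b = m' := by
    have h1 : Module.finrank ℝ (Submodule.span ℝ b) = b.toFinset.card :=
      finrank_span_set_eq_card hb_li
    rw [hb_span, hspan] at h1
    rw [Set.toFinset_card] at h1
    omega
  let e : Fin m' ≃ b := (Fintype.equivFinOfCardEq hcard).symm
  have hchoose : ∀ i : Fin m', ∃ j : Fin n, A j = (e i : Fin (m' + 1) → ℝ) := fun i =>
    hb_sub (e i).2
  choose r hr using hchoose
  refine ⟨r, ?_⟩
  have : (fun k => A (r k)) = (fun x : b => (x : Fin (m' + 1) → ℝ)) ∘ e := by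
    funext k; simp [hr k]
  rw [this]
  exact hb_li.comp e e.injective

end jacHelpers

/-- Existence of a null vector field: a nowhere vanishing smooth vector
field `η` on a neighborhood of `0` such that `ker df_p = span(η_p)` at every singular
point `p` near `0`. -/
theorem stmt3 {m n : ℕ} (hm : 0 < m) (hmn : m < n)
    (f : (Fin m → ℝ) → (Fin n → ℝ))
    (hf : ContDiff ℝ (⊤ : ℕ∞) f) (hf0 : f 0 = 0)
    (hrankf : Matrix.rank (jac f 0) = m - 1) :
    ∃ U ∈ 𝓝 (0 : Fin m → ℝ), ∃ η : (Fin m → ℝ) → (Fin m → ℝ),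
      ContDiffOn ℝ (⊤ : ℕ∞) η U ∧ (∀ p ∈ U, η p ≠ 0) ∧
      ∀ p ∈ U, Matrix.rank (jac f p) < m →
        LinearMap.ker (fderiv ℝ f p).toLinearMap = Submodule.span ℝ {η p} := by
  classical
  obtain ⟨m', rfl⟩ : ∃ m', m = m' + 1 := ⟨m - 1, (Nat.succ_pred_eq_of_pos hm).symm⟩
  rw [Nat.add_sub_cancel] at hrankf
  obtain ⟨r, hr⟩ := exists_rows (jac f 0) hrankf
  set η : (Fin (m' + 1) → ℝ) → (Fin (m' + 1) → ℝ) :=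
    fun p => crossVec ((jac f p).submatrix r id) with hηdef
  have hηsmooth : ContDiff ℝ (⊤ : ℕ∞) η := by
    rw [contDiff_pi]
    intro l
    have hrw : (fun p => η p l)
        = fun p => (-1 : ℝ) ^ (l : ℕ)
            * ((((jac f p).submatrix r id).submatrix id l.succAbove).det) := rfl
    rw [hrw]
    refine contDiff_const.mul (contDiff_det fun i j => ?_)
    exact contDiff_jac hf (r i) (l.succAbove j)
  have h0 : η 0 ≠ 0 := by
    apply crossVec_ne_zero
    exact hr
  refine ⟨{p | η p ≠ 0}, (isOpen_ne.preimage hηsmooth.continuous).mem_nhds h0, η,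
    hηsmooth.contDiffOn, fun p hp => hp, ?_⟩
  intro p hp hrank
  have hp' : η p ≠ 0 := hp
  set B : Matrix (Fin m') (Fin (m' + 1)) ℝ := (jac f p).submatrix r id with hB
  obtain ⟨l, hl⟩ : ∃ l, η p l ≠ 0 := Function.ne_iff.mp hp'
  have hdet : (B.submatrix id l.succAbove).det ≠ 0 := by
    intro hzero
    apply hl
    have : η p l = (-1 : ℝ) ^ (l : ℕ) * (B.submatrix id l.succAbove).det := rfl
    rw [this, hzero, mul_zero]
  have hS : IsUnit (B.submatrix id l.succAbove) :=
    (Matrix.isUnit_iff_isUnit_det _).mpr hdet.isUnit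
  have hrowsS : LinearIndependent ℝ (fun k => (B.submatrix id l.succAbove) k) :=
    Matrix.linearIndependent_rows_iff_isUnit.mpr hS
  have hrowsB : LinearIndependent ℝ (fun k => B k) := by
    apply LinearIndependent.of_comp (LinearMap.funLeft ℝ ℝ l.succAbove)
    exact hrowsS
  have hrows : LinearIndependent ℝ (fun k => jac f p (r k)) := hrowsB
  have hge : m' ≤ (jac f p).rank := by
    rw [Matrix.rank_eq_finrank_span_row]
    have h1 : Submodule.span ℝ (Set.range fun k => jac f p (r k))
        ≤ Submodule.span ℝ (Set.range (jac f p)) :=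
      Submodule.span_mono (by rintro _ ⟨k, rfl⟩; exact ⟨r k, rfl⟩)
    have h2 : Module.finrank ℝ
        (Submodule.span ℝ (Set.range fun k => jac f p (r k))) = m' := by
      simpa using finrank_span_eq_card hrows
    calc m' = _ := h2.symm
      _ ≤ _ := Submodule.finrank_mono h1
  have hrankjac : (jac f p).rank = m' := le_antisymm (by omega) hge
  have hrankB : B.rank = m' := by
    have := hrowsB.rank_matrix; simp at this; exact this
  have hdomrank : Module.finrank ℝ (Fin (m' + 1) → ℝ) = m' + 1 := by
    simp [Module.finrank_fin_fun]
  have hkerB : Module.finrank ℝ (LinearMap.ker B.mulVecLin) = 1 := by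
    have h3 := LinearMap.finrank_range_add_finrank_ker B.mulVecLin
    rw [hdomrank] at h3
    have h4 : Module.finrank ℝ (LinearMap.range B.mulVecLin) = m' := hrankB
    omega
  have hkerJ : Module.finrank ℝ (LinearMap.ker (jac f p).mulVecLin) = 1 := by
    have h3 := LinearMap.finrank_range_add_finrank_ker (jac f p).mulVecLin
    rw [hdomrank] at h3
    have h4 : Module.finrank ℝ (LinearMap.range (jac f p).mulVecLin) = m' := hrankjac
    omega
  have hsub1 : LinearMap.ker (jac f p).mulVecLin ≤ LinearMap.ker B.mulVecLin := by
    intro v hv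
    rw [LinearMap.mem_ker, Matrix.mulVecLin_apply] at hv ⊢
    funext k
    have hk : B.mulVec v k = (jac f p).mulVec v (r k) := by
      simp [hB, Matrix.mulVec, dotProduct, Matrix.submatrix_apply]
    rw [hk, hv]
    rfl
  have hspanle : Submodule.span ℝ {η p} ≤ LinearMap.ker B.mulVecLin := by
    rw [Submodule.span_le, Set.singleton_subset_iff]
    rw [SetLike.mem_coe, LinearMap.mem_ker, Matrix.mulVecLin_apply]
    exact mulVec_crossVec B
  have h1 : Submodule.span ℝ {η p} = LinearMap.ker B.mulVecLin :=
    Submodule.eq_of_le_of_finrank_le hspanle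
      (by rw [hkerB, finrank_span_singleton hp'])
  have h2 : LinearMap.ker (jac f p).mulVecLin = LinearMap.ker B.mulVecLin :=
    Submodule.eq_of_le_of_finrank_le hsub1 (by rw [hkerB, hkerJ])
  rw [ker_fderiv_eq hf, h2, ← h1]
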